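/- For the wheel graph W_Δ with Δ ≥ 3 spokes, the sum index of W_Δ equals max{5, Δ}. In particular, s(W_3) = s(W_4) = 5 and s(W_Δ) = Δ for Δ ≥ 5. -/
import Mathlib


open SimpleGraph Function

def edgePlus {V : Type*} (f : V → ℤ) : Sym2 V → ℤ :=
  Sym2.lift ⟨fun u v => f u + f v, fun u v => by ring⟩

def edgeMinus {V : Type*} (f : V → ℤ) : Sym2 V → ℤ :=
  Sym2.lift ⟨fun u v => |f u - f v|, fun u v => abs_sub_comm _ _⟩

/-- The sum index: the minimum, over injective vertex labelings `f : V → ℤ`,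
of the number of distinct values of `f⁺(uv) = f u + f v` on the edges. -/
noncomputable def sumIndex {V : Type*} (G : SimpleGraph V) : ℕ :=
  sInf {k | ∃ f : V → ℤ, Function.Injective f ∧ (edgePlus f '' G.edgeSet).ncard = k}

/-- The difference index: the minimum, over injective vertex labelings `f : V → ℤ`,
of the number of distinct values of `f⁻(uv) = |f u − f v|` on the edges. -/
noncomputable def diffIndex {V : Type*} (G : SimpleGraph V) : ℕ :=
  sInf {k | ∃ f : V → ℤ, Function.Injective f ∧ (edgeMinus f '' G.edgeSet).ncard = k}

/-- The wheel `W_Δ`: a cycle on `ZMod Δ` together with a hub `none` adjacent to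
every cycle vertex. -/
def wheel (Δ : ℕ) : SimpleGraph (Option (ZMod Δ)) :=
  SimpleGraph.fromRel (fun a b =>
    (a = none ∧ b ≠ none) ∨ ∃ i j : ZMod Δ, a = some i ∧ b = some j ∧ i - j = 1)

/-! ### Auxiliary material -/

section Aux

/-- Rim labeling used for `Δ ≥ 5`: a zigzag of decreasing magnitudes together with a
short tail, so that every consecutive (cyclic) sum is again a label. -/
def wheelLabel (Δ k : ℕ) : ℤ :=
  if Δ % 2 = 1 then
    if k < Δ - 2 then (if k % 2 = 0 then ((Δ:ℤ) - 2 - k) else -((Δ:ℤ) - 2 - k))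
    else if k = Δ - 2 then (Δ:ℤ) - 3 else -1
  else
    if k < Δ - 3 then (if k % 2 = 0 then ((Δ:ℤ) - 3 - k) else -((Δ:ℤ) - 3 - k))
    else if k = Δ - 3 then -3 else if k = Δ - 2 then (Δ:ℤ) - 4 else -1

local notation "g" => wheelLabel

variable {Δ k : ℕ}

lemma gOB0 (hp : Δ % 2 = 1) (h1 : k < Δ - 2) (h2 : k % 2 = 0) : g Δ k = (Δ:ℤ)-2-k := by
  unfold wheelLabel; rw [if_pos hp, if_pos h1, if_pos h2]
lemma gOB1 (hp : Δ % 2 = 1) (h1 : k < Δ - 2) (h2 : k % 2 = 1) : g Δ k = -((Δ:ℤ)-2-k) := by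
  unfold wheelLabel; rw [if_pos hp, if_pos h1, if_neg (by omega)]
lemma gOM (hΔ : 5 ≤ Δ) (hp : Δ % 2 = 1) : g Δ (Δ-2) = (Δ:ℤ)-3 := by
  unfold wheelLabel; rw [if_pos hp, if_neg (by omega), if_pos rfl]
lemma gOL (hΔ : 5 ≤ Δ) (hp : Δ % 2 = 1) : g Δ (Δ-1) = -1 := by
  unfold wheelLabel; rw [if_pos hp, if_neg (by omega), if_neg (by omega)]
lemma gEB0 (hp : Δ % 2 = 0) (h1 : k < Δ - 3) (h2 : k % 2 = 0) : g Δ k = (Δ:ℤ)-3-k := by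
  unfold wheelLabel; rw [if_neg (by omega), if_pos h1, if_pos h2]
lemma gEB1 (hp : Δ % 2 = 0) (h1 : k < Δ - 3) (h2 : k % 2 = 1) : g Δ k = -((Δ:ℤ)-3-k) := by
  unfold wheelLabel; rw [if_neg (by omega), if_pos h1, if_neg (by omega)]
lemma gEm (hΔ : 5 ≤ Δ) (hp : Δ % 2 = 0) : g Δ (Δ-3) = -3 := by
  unfold wheelLabel; rw [if_neg (by omega), if_neg (by omega), if_pos rfl]
lemma gEn (hΔ : 5 ≤ Δ) (hp : Δ % 2 = 0) : g Δ (Δ-2) = (Δ:ℤ)-4 := by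
  unfold wheelLabel; rw [if_neg (by omega), if_neg (by omega), if_neg (by omega), if_pos rfl]
lemma gEl (hΔ : 5 ≤ Δ) (hp : Δ % 2 = 0) : g Δ (Δ-1) = -1 := by
  unfold wheelLabel
  rw [if_neg (by omega), if_neg (by omega), if_neg (by omega), if_neg (by omega)]

lemma g_ne_zero (hΔ : 5 ≤ Δ) (hk : k < Δ) : g Δ k ≠ 0 := by
  simp only [wheelLabel]; split_ifs <;> omega

lemma g_inj {k1 k2 : ℕ} (hΔ : 5 ≤ Δ) (h1 : k1 < Δ) (h2 : k2 < Δ)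
    (h : g Δ k1 = g Δ k2) : k1 = k2 := by
  simp only [wheelLabel] at h; split_ifs at h <;> omega

lemma g_step (hΔ : 5 ≤ Δ) (hk : k + 1 < Δ) :
    ∃ j < Δ, g Δ k + g Δ (k+1) = g Δ j := by
  rcases Nat.mod_two_eq_zero_or_one Δ with hp | hp
  · rcases (by omega : k < Δ-4 ∨ k = Δ-4 ∨ k = Δ-3 ∨ k = Δ-2) with hr | hr | hr | hr
    · rcases Nat.mod_two_eq_zero_or_one k with hq | hq
      · exact ⟨Δ-4, by omega, by
          rw [gEB0 hp (by omega) hq, gEB1 hp (by omega) (by omega), gEB0 hp (by omega) (by omega)]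
          omega⟩
      · exact ⟨Δ-1, by omega, by
          rw [gEB1 hp (by omega) hq, gEB0 hp (by omega) (by omega), gEl hΔ hp]; omega⟩
    · refine ⟨Δ-5, by omega, ?_⟩
      have e1 : k + 1 = Δ - 3 := by omega
      rw [gEB0 hp (by omega) (by omega), e1, gEm hΔ hp, gEB1 hp (by omega) (by omega)]
      omega
    · by_cases h6 : Δ = 6
      · exact ⟨Δ-1, by omega, by
          rw [hr, show Δ-3+1 = Δ-2 from by omega, gEm hΔ hp, gEn hΔ hp, gEl hΔ hp]; omega⟩
      · exact ⟨4, by omega, by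
          rw [hr, show Δ-3+1 = Δ-2 from by omega, gEm hΔ hp, gEn hΔ hp,
            gEB0 hp (by omega) (by omega)]; omega⟩
    · exact ⟨2, by omega, by
        rw [hr, show Δ-2+1 = Δ-1 from by omega, gEn hΔ hp, gEl hΔ hp,
          gEB0 hp (by omega) (by omega)]; omega⟩
  · rcases (by omega : k < Δ-3 ∨ k = Δ-3 ∨ k = Δ-2) with hr | hr | hr
    · rcases Nat.mod_two_eq_zero_or_one k with hq | hq
      · exact ⟨Δ-3, by omega, by
          rw [gOB0 hp (by omega) hq, gOB1 hp (by omega) (by omega), gOB0 hp (by omega) (by omega)]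
          omega⟩
      · exact ⟨Δ-1, by omega, by
          rw [gOB1 hp (by omega) hq, gOB0 hp (by omega) (by omega), gOL hΔ hp]; omega⟩
    · exact ⟨0, by omega, by
        rw [hr, show Δ-3+1 = Δ-2 from by omega, gOB0 hp (by omega) (by omega), gOM hΔ hp,
          gOB0 hp (by omega) (by omega)]
        omega⟩
    · exact ⟨2, by omega, by
        rw [hr, show Δ-2+1 = Δ-1 from by omega, gOM hΔ hp, gOL hΔ hp,
          gOB0 hp (by omega) (by omega)]; omega⟩

lemma g_wrap (hΔ : 5 ≤ Δ) : ∃ j < Δ, g Δ (Δ-1) + g Δ 0 = g Δ j := by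
  rcases Nat.mod_two_eq_zero_or_one Δ with hp | hp
  · exact ⟨Δ-2, by omega, by
      rw [gEl hΔ hp, gEn hΔ hp, gEB0 hp (by omega) (by omega)]; omega⟩
  · exact ⟨Δ-2, by omega, by
      rw [gOL hΔ hp, gOM hΔ hp, gOB0 hp (by omega) (by omega)]; omega⟩

lemma mem_image_iff {V : Type*} {G : SimpleGraph V} {f : V → ℤ} {x : ℤ} :
    x ∈ edgePlus f '' G.edgeSet ↔ ∃ a b, G.Adj a b ∧ f a + f b = x := by
  constructor
  · rintro ⟨e, he, rfl⟩
    induction e with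
    | _ a b => exact ⟨a, b, he, rfl⟩
  · rintro ⟨a, b, hab, rfl⟩
    exact ⟨s(a, b), hab, rfl⟩

lemma wheel_adj {a b : Option (ZMod Δ)} :
    (wheel Δ).Adj a b ↔ a ≠ b ∧
      ((a = none ∧ b ≠ none) ∨ (b = none ∧ a ≠ none) ∨
        ∃ i j : ZMod Δ, a = some i ∧ b = some j ∧ (i - j = 1 ∨ j - i = 1)) := by
  simp only [wheel, fromRel_adj]
  constructor
  · rintro ⟨hne, h | h⟩
    · rcases h with ⟨h1, h2⟩ | ⟨i, j, h1, h2, h3⟩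
      · exact ⟨hne, Or.inl ⟨h1, h2⟩⟩
      · exact ⟨hne, Or.inr (Or.inr ⟨i, j, h1, h2, Or.inl h3⟩)⟩
    · rcases h with ⟨h1, h2⟩ | ⟨i, j, h1, h2, h3⟩
      · exact ⟨hne, Or.inr (Or.inl ⟨h1, h2⟩)⟩
      · exact ⟨hne, Or.inr (Or.inr ⟨j, i, h2, h1, Or.inr h3⟩)⟩
  · rintro ⟨hne, ⟨h1, h2⟩ | ⟨h1, h2⟩ | ⟨i, j, h1, h2, h3 | h3⟩⟩
    · exact ⟨hne, Or.inl (Or.inl ⟨h1, h2⟩)⟩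
    · exact ⟨hne, Or.inr (Or.inl ⟨h1, h2⟩)⟩
    · exact ⟨hne, Or.inl (Or.inr ⟨i, j, h1, h2, h3⟩)⟩
    · exact ⟨hne, Or.inr (Or.inr ⟨j, i, h2, h1, h3⟩)⟩

lemma hub_adj (i : ZMod Δ) : (wheel Δ).Adj none (some i) := by
  rw [wheel_adj]
  exact ⟨by simp, Or.inl ⟨rfl, by simp⟩⟩

lemma lower_Δ (hΔ : 3 ≤ Δ) (f : Option (ZMod Δ) → ℤ) (hf : Function.Injective f) :
    Δ ≤ (edgePlus f '' (wheel Δ).edgeSet).ncard := by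
  haveI : NeZero Δ := ⟨by omega⟩
  set S := edgePlus f '' (wheel Δ).edgeSet with hS
  have hfin : S.Finite := Set.Finite.image _ (Set.toFinite _)
  have hsub : Set.range (fun i : ZMod Δ => f none + f (some i)) ⊆ S := by
    rintro x ⟨i, rfl⟩
    exact mem_image_iff.2 ⟨none, some i, hub_adj i, rfl⟩
  have hinj : Function.Injective (fun i : ZMod Δ => f none + f (some i)) := by
    intro i j h
    simpa using hf (by simpa using h : f (some i) = f (some j))
  calc Δ = (Set.range (fun i : ZMod Δ => f none + f (some i))).ncard := by
            rw [← Set.image_univ, Set.ncard_image_of_injective _ hinj, Set.ncard_univ]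
            simp [Nat.card_eq_fintype_card, ZMod.card]
       _ ≤ S.ncard := Set.ncard_le_ncard hsub hfin

lemma upper_ge5 (hΔ : 5 ≤ Δ) :
    ∃ f : Option (ZMod Δ) → ℤ, Function.Injective f ∧
      (edgePlus f '' (wheel Δ).edgeSet).ncard = Δ := by
  haveI : NeZero Δ := ⟨by omega⟩
  set f : Option (ZMod Δ) → ℤ := fun o => o.elim 0 (fun i => g Δ i.val) with hfdef
  have hval : ∀ i : ZMod Δ, i.val < Δ := fun i => ZMod.val_lt i
  have hinj : Function.Injective f := by
    rintro (_ | i) (_ | j) h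
    · rfl
    · exact absurd h.symm (g_ne_zero hΔ (hval j))
    · exact absurd h (g_ne_zero hΔ (hval i))
    · exact congrArg _ (ZMod.val_injective Δ (g_inj hΔ (hval i) (hval j) h))
  have key : ∀ j : ZMod Δ, ∃ j' : ZMod Δ, g Δ j.val + g Δ (j+1).val = g Δ j'.val := by
    intro j
    haveI : Fact (1 < Δ) := ⟨by omega⟩
    have h1 : (j + 1).val = (j.val + 1) % Δ := by
      rw [ZMod.val_add, ZMod.val_one]
    by_cases hj : j.val = Δ - 1
    · rw [h1, hj, show Δ - 1 + 1 = Δ from by omega, Nat.mod_self]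
      obtain ⟨j', hj', hgj⟩ := g_wrap hΔ
      exact ⟨(j' : ZMod Δ), by rw [ZMod.val_cast_of_lt hj']; exact hgj⟩
    · have hlt : j.val + 1 < Δ := by have := hval j; omega
      rw [h1, Nat.mod_eq_of_lt hlt]
      obtain ⟨j', hj', hgj⟩ := g_step hΔ hlt
      exact ⟨(j' : ZMod Δ), by rw [ZMod.val_cast_of_lt hj']; exact hgj⟩
  refine ⟨f, hinj, ?_⟩
  have hginj : Function.Injective (fun i : ZMod Δ => g Δ i.val) := by
    intro i j h
    exact ZMod.val_injective Δ (g_inj hΔ (hval i) (hval j) h)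
  have hrange : edgePlus f '' (wheel Δ).edgeSet = Set.range (fun i : ZMod Δ => g Δ i.val) := by
    ext x
    rw [mem_image_iff]
    constructor
    · rintro ⟨a, b, hab, rfl⟩
      rw [wheel_adj] at hab
      rcases hab with ⟨hne, ⟨rfl, h2⟩ | ⟨rfl, h2⟩ | ⟨i, j, rfl, rfl, h3 | h3⟩⟩
      · rcases Option.ne_none_iff_exists'.1 h2 with ⟨i, rfl⟩
        exact ⟨i, by simp [hfdef]⟩
      · rcases Option.ne_none_iff_exists'.1 h2 with ⟨i, rfl⟩
        exact ⟨i, by simp [hfdef]⟩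
      · obtain ⟨j', hj'⟩ := key j
        have hij : i = j + 1 := by
          have := sub_eq_iff_eq_add.1 h3
          rw [this, add_comm]
        refine ⟨j', ?_⟩
        show g Δ j'.val = f (some i) + f (some j)
        rw [hij, show f (some (j+1)) = g Δ (j+1).val from rfl,
          show f (some j) = g Δ j.val from rfl]
        omega
      · obtain ⟨j', hj'⟩ := key i
        have hij : j = i + 1 := by
          have := sub_eq_iff_eq_add.1 h3
          rw [this, add_comm]
        refine ⟨j', ?_⟩
        show g Δ j'.val = f (some i) + f (some j)
        rw [hij, show f (some (i+1)) = g Δ (i+1).val from rfl,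
          show f (some i) = g Δ i.val from rfl]
        omega
    · rintro ⟨i, rfl⟩
      exact ⟨none, some i, hub_adj i, by simp [hfdef]⟩
  rw [hrange, ← Set.image_univ, Set.ncard_image_of_injective _ hginj, Set.ncard_univ]
  simp [Nat.card_eq_fintype_card, ZMod.card]

lemma card4 (a b c d : ℤ) (h1 : a ≠ b) (h2 : a ≠ c) (h3 : a ≠ d)
    (h5 : b ≠ c) (h6 : b ≠ d) (h8 : c ≠ d) :
    ({a, b, c, d} : Finset ℤ).card = 4 := by
  rw [Finset.card_insert_of_notMem (by simp only [Finset.mem_insert, Finset.mem_singleton]; omega),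
      Finset.card_insert_of_notMem (by simp only [Finset.mem_insert, Finset.mem_singleton]; omega),
      Finset.card_insert_of_notMem (by simp only [Finset.mem_singleton]; omega),
      Finset.card_singleton]

lemma card5 (a b c d e : ℤ) (h1 : a ≠ b) (h2 : a ≠ c) (h3 : a ≠ d) (h4 : a ≠ e)
    (h5 : b ≠ c) (h6 : b ≠ d) (h7 : b ≠ e) (h8 : c ≠ d) (h9 : c ≠ e) (h10 : d ≠ e) :
    ({a, b, c, d, e} : Finset ℤ).card = 5 := by
  rw [Finset.card_insert_of_notMem (by simp only [Finset.mem_insert, Finset.mem_singleton]; omega),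
      Finset.card_insert_of_notMem (by simp only [Finset.mem_insert, Finset.mem_singleton]; omega),
      Finset.card_insert_of_notMem (by simp only [Finset.mem_insert, Finset.mem_singleton]; omega),
      Finset.card_insert_of_notMem (by simp only [Finset.mem_singleton]; omega),
      Finset.card_singleton]

lemma five_le (a b c d e : ℤ) (T : Finset ℤ) (hsub : ({a, b, c, d, e} : Finset ℤ) ⊆ T)
    (h1 : a ≠ b) (h2 : a ≠ c) (h3 : a ≠ d) (h4 : a ≠ e)
    (h5 : b ≠ c) (h6 : b ≠ d) (h7 : b ≠ e) (h8 : c ≠ d) (h9 : c ≠ e) (h10 : d ≠ e) :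
    5 ≤ T.card := by
  have := Finset.card_le_card hsub
  rw [card5 a b c d e h1 h2 h3 h4 h5 h6 h7 h8 h9 h10] at this
  exact this

set_option maxHeartbeats 1600000 in
lemma k4_lower (x0 x1 x2 x3 : ℤ) (d01 : x0 ≠ x1) (d02 : x0 ≠ x2) (d03 : x0 ≠ x3)
    (d12 : x1 ≠ x2) (d13 : x1 ≠ x3) (d23 : x2 ≠ x3) :
    5 ≤ ({x0+x1, x0+x2, x0+x3, x1+x2, x1+x3, x2+x3} : Finset ℤ).card := by
  have hs : ∀ y1 y2 y3 y4 y5 : ℤ,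
      y1 ∈ ({x0+x1, x0+x2, x0+x3, x1+x2, x1+x3, x2+x3} : Finset ℤ) →
      y2 ∈ ({x0+x1, x0+x2, x0+x3, x1+x2, x1+x3, x2+x3} : Finset ℤ) →
      y3 ∈ ({x0+x1, x0+x2, x0+x3, x1+x2, x1+x3, x2+x3} : Finset ℤ) →
      y4 ∈ ({x0+x1, x0+x2, x0+x3, x1+x2, x1+x3, x2+x3} : Finset ℤ) →
      y5 ∈ ({x0+x1, x0+x2, x0+x3, x1+x2, x1+x3, x2+x3} : Finset ℤ) →
      ({y1, y2, y3, y4, y5} : Finset ℤ) ⊆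
        ({x0+x1, x0+x2, x0+x3, x1+x2, x1+x3, x2+x3} : Finset ℤ) := by
    intro y1 y2 y3 y4 y5 h1 h2 h3 h4 h5 x hx
    simp only [Finset.mem_insert, Finset.mem_singleton] at hx
    rcases hx with rfl | rfl | rfl | rfl | rfl <;> assumption
  have m01 : x0+x1 ∈ ({x0+x1, x0+x2, x0+x3, x1+x2, x1+x3, x2+x3} : Finset ℤ) := by
    simp only [Finset.mem_insert, Finset.mem_singleton]; tauto
  have m02 : x0+x2 ∈ ({x0+x1, x0+x2, x0+x3, x1+x2, x1+x3, x2+x3} : Finset ℤ) := by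
    simp only [Finset.mem_insert, Finset.mem_singleton]; tauto
  have m03 : x0+x3 ∈ ({x0+x1, x0+x2, x0+x3, x1+x2, x1+x3, x2+x3} : Finset ℤ) := by
    simp only [Finset.mem_insert, Finset.mem_singleton]; tauto
  have m12 : x1+x2 ∈ ({x0+x1, x0+x2, x0+x3, x1+x2, x1+x3, x2+x3} : Finset ℤ) := by
    simp only [Finset.mem_insert, Finset.mem_singleton]; tauto
  have m13 : x1+x3 ∈ ({x0+x1, x0+x2, x0+x3, x1+x2, x1+x3, x2+x3} : Finset ℤ) := by
    simp only [Finset.mem_insert, Finset.mem_singleton]; tauto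
  have m23 : x2+x3 ∈ ({x0+x1, x0+x2, x0+x3, x1+x2, x1+x3, x2+x3} : Finset ℤ) := by
    simp only [Finset.mem_insert, Finset.mem_singleton]; tauto
  by_cases E1 : x0 + x1 = x2 + x3
  · by_cases E2 : x0 + x2 = x1 + x3
    · omega
    · by_cases E3 : x0 + x3 = x1 + x2
      · omega
      · exact five_le _ _ _ _ _ _ (hs _ _ _ _ _ m01 m02 m03 m12 m13)
          (by omega) (by omega) (by omega) (by omega) (by omega)
          (by omega) (by omega) (by omega) (by omega) (by omega)
  · by_cases E2 : x0 + x2 = x1 + x3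
    · by_cases E3 : x0 + x3 = x1 + x2
      · omega
      · exact five_le _ _ _ _ _ _ (hs _ _ _ _ _ m01 m02 m03 m12 m23)
          (by omega) (by omega) (by omega) (by omega) (by omega)
          (by omega) (by omega) (by omega) (by omega) (by omega)
    · exact five_le _ _ _ _ _ _ (hs _ _ _ _ _ m01 m02 m03 m13 m23)
        (by omega) (by omega) (by omega) (by omega) (by omega)
        (by omega) (by omega) (by omega) (by omega) (by omega)

lemma lower3 (f : Option (ZMod 3) → ℤ) (hf : Function.Injective f) :
    5 ≤ (edgePlus f '' (wheel 3).edgeSet).ncard := by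
  set S := edgePlus f '' (wheel 3).edgeSet with hS
  have hfin : S.Finite := Set.Finite.image _ (Set.toFinite _)
  set T : Finset ℤ := {f none + f (some 0), f none + f (some 1), f none + f (some 2),
    f (some 0) + f (some 1), f (some 0) + f (some 2), f (some 1) + f (some 2)} with hT
  have hsubT : ↑T ⊆ S := by
    intro x hx
    simp only [hT, Finset.coe_insert, Set.mem_insert_iff, Finset.coe_singleton,
      Set.mem_singleton_iff] at hx
    rcases hx with rfl | rfl | rfl | rfl | rfl | rfl
    · exact mem_image_iff.2 ⟨none, some 0, by rw [wheel_adj]; decide, rfl⟩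
    · exact mem_image_iff.2 ⟨none, some 1, by rw [wheel_adj]; decide, rfl⟩
    · exact mem_image_iff.2 ⟨none, some 2, by rw [wheel_adj]; decide, rfl⟩
    · exact mem_image_iff.2 ⟨some 0, some 1, by rw [wheel_adj]; decide, rfl⟩
    · exact mem_image_iff.2 ⟨some 0, some 2, by rw [wheel_adj]; decide, rfl⟩
    · exact mem_image_iff.2 ⟨some 1, some 2, by rw [wheel_adj]; decide, rfl⟩
  have h5 : 5 ≤ T.card := by
    apply k4_lower <;> exact hf.ne (by decide)
  calc (5:ℕ) ≤ T.card := h5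
    _ = (↑T : Set ℤ).ncard := (Set.ncard_coe_finset T).symm
    _ ≤ S.ncard := Set.ncard_le_ncard hsubT hfin

lemma lower4 (f : Option (ZMod 4) → ℤ) (hf : Function.Injective f) :
    5 ≤ (edgePlus f '' (wheel 4).edgeSet).ncard := by
  by_contra hc
  push_neg at hc
  set S := edgePlus f '' (wheel 4).edgeSet with hS
  have hfin : S.Finite := Set.Finite.image _ (Set.toFinite _)
  set T : Finset ℤ := {f none + f (some 0), f none + f (some 1), f none + f (some 2),
    f none + f (some 3)} with hT
  have hsubT : ↑T ⊆ S := by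
    intro x hx
    simp only [hT, Finset.coe_insert, Set.mem_insert_iff, Finset.coe_singleton,
      Set.mem_singleton_iff] at hx
    rcases hx with rfl | rfl | rfl | rfl
    · exact mem_image_iff.2 ⟨none, some 0, by rw [wheel_adj]; decide, rfl⟩
    · exact mem_image_iff.2 ⟨none, some 1, by rw [wheel_adj]; decide, rfl⟩
    · exact mem_image_iff.2 ⟨none, some 2, by rw [wheel_adj]; decide, rfl⟩
    · exact mem_image_iff.2 ⟨none, some 3, by rw [wheel_adj]; decide, rfl⟩
  have d1 : f none ≠ f (some 0) := hf.ne (by decide)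
  have d2 : f none ≠ f (some 1) := hf.ne (by decide)
  have d3 : f none ≠ f (some 2) := hf.ne (by decide)
  have d4 : f none ≠ f (some 3) := hf.ne (by decide)
  have d5 : f (some 0) ≠ f (some 1) := hf.ne (by decide)
  have d6 : f (some 0) ≠ f (some 2) := hf.ne (by decide)
  have d7 : f (some 0) ≠ f (some 3) := hf.ne (by decide)
  have d8 : f (some 1) ≠ f (some 2) := hf.ne (by decide)
  have d9 : f (some 1) ≠ f (some 3) := hf.ne (by decide)
  have d10 : f (some 2) ≠ f (some 3) := hf.ne (by decide)
  have hT4 : T.card = 4 := by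
    rw [hT]
    exact card4 _ _ _ _ (by omega) (by omega) (by omega) (by omega) (by omega) (by omega)
  have hTS : ↑T = S := by
    apply Set.eq_of_subset_of_ncard_le hsubT _ hfin
    rw [Set.ncard_coe_finset, hT4]
    omega
  have hmem : ∀ a b : Option (ZMod 4), (wheel 4).Adj a b →
      f a + f b ∈ ({f none + f (some 0), f none + f (some 1), f none + f (some 2),
        f none + f (some 3)} : Finset ℤ) := by
    intro a b hab
    have : f a + f b ∈ S := mem_image_iff.2 ⟨a, b, hab, rfl⟩
    rw [← hTS] at this
    simpa [hT] using this
  have c01 := hmem (some 0) (some 1) (by rw [wheel_adj]; decide)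
  have c12 := hmem (some 1) (some 2) (by rw [wheel_adj]; decide)
  have c23 := hmem (some 2) (some 3) (by rw [wheel_adj]; decide)
  have c30 := hmem (some 3) (some 0) (by rw [wheel_adj]; decide)
  simp only [Finset.mem_insert, Finset.mem_singleton] at c01 c12 c23 c30
  omega

lemma edgePlus_mk {V : Type*} (f : V → ℤ) (a b : V) : edgePlus f s(a, b) = f a + f b := rfl

def f3 : Option (ZMod 3) → ℤ := fun o => o.elim 0 (fun i => (i.val : ℤ) + 1)
def f4 : Option (ZMod 4) → ℤ := fun o => o.elim 0 (fun i =>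
  if i = 0 then -1 else if i = 1 then 2 else if i = 2 then 1 else 3)

lemma upper3 : ∃ f : Option (ZMod 3) → ℤ, Function.Injective f ∧
    (edgePlus f '' (wheel 3).edgeSet).ncard = 5 := by
  refine ⟨f3, by decide, ?_⟩
  have hE : (wheel 3).edgeSet =
      {s(none, some 0), s(none, some 1), s(none, some 2),
       s(some 0, some 1), s(some 1, some 2), s(some 2, some 0)} := by
    ext e
    refine e.ind fun a b => ?_
    simp only [Set.mem_insert_iff, Set.mem_singleton_iff, mem_edgeSet, wheel, fromRel_adj]
    revert a b
    decide
  have vn : f3 none = 0 := by decide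
  have v0 : f3 (some 0) = 1 := by decide
  have v1 : f3 (some 1) = 2 := by decide
  have v2 : f3 (some 2) = 3 := by decide
  have himg : edgePlus f3 '' (wheel 3).edgeSet = ↑({1, 2, 3, 4, 5} : Finset ℤ) := by
    rw [hE]
    simp only [Set.image_insert_eq, Set.image_singleton, edgePlus_mk, vn, v0, v1, v2]
    norm_num
    ext x
    simp only [Set.mem_insert_iff, Set.mem_singleton_iff, Finset.coe_insert,
      Finset.coe_singleton, Finset.mem_insert, Finset.mem_singleton]
    omega
  rw [himg, Set.ncard_coe_finset]
  decide

lemma upper4 : ∃ f : Option (ZMod 4) → ℤ, Function.Injective f ∧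
    (edgePlus f '' (wheel 4).edgeSet).ncard = 5 := by
  refine ⟨f4, by decide, ?_⟩
  have hE : (wheel 4).edgeSet =
      {s(none, some 0), s(none, some 1), s(none, some 2), s(none, some 3),
       s(some 0, some 1), s(some 1, some 2), s(some 2, some 3), s(some 3, some 0)} := by
    ext e
    refine e.ind fun a b => ?_
    simp only [Set.mem_insert_iff, Set.mem_singleton_iff, mem_edgeSet, wheel, fromRel_adj]
    revert a b
    decide
  have vn : f4 none = 0 := by decide
  have v0 : f4 (some 0) = -1 := by decide
  have v1 : f4 (some 1) = 2 := by decide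
  have v2 : f4 (some 2) = 1 := by decide
  have v3 : f4 (some 3) = 3 := by decide
  have himg : edgePlus f4 '' (wheel 4).edgeSet = ↑({-1, 2, 1, 3, 4} : Finset ℤ) := by
    rw [hE]
    simp only [Set.image_insert_eq, Set.image_singleton, edgePlus_mk, vn, v0, v1, v2, v3]
    norm_num
    ext x
    simp only [Set.mem_insert_iff, Set.mem_singleton_iff, Finset.coe_insert,
      Finset.coe_singleton, Finset.mem_insert, Finset.mem_singleton]
    omega
  rw [himg, Set.ncard_coe_finset]
  decide

end Aux

theorem stmt6 (Δ : ℕ) (hΔ : 3 ≤ Δ) : sumIndex (wheel Δ) = max 5 Δ := by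
  have hmem : max 5 Δ ∈ {k | ∃ f : Option (ZMod Δ) → ℤ, Function.Injective f ∧
      (edgePlus f '' (wheel Δ).edgeSet).ncard = k} := by
    rcases (by omega : Δ = 3 ∨ Δ = 4 ∨ 5 ≤ Δ) with rfl | rfl | h5
    · obtain ⟨f, hf, hcard⟩ := upper3
      exact ⟨f, hf, by rw [hcard]; decide⟩
    · obtain ⟨f, hf, hcard⟩ := upper4
      exact ⟨f, hf, by rw [hcard]; decide⟩
    · obtain ⟨f, hf, hcard⟩ := upper_ge5 h5
      exact ⟨f, hf, by rw [hcard, max_eq_right (by omega)]⟩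
  have hlow : ∀ k ∈ {k | ∃ f : Option (ZMod Δ) → ℤ, Function.Injective f ∧
      (edgePlus f '' (wheel Δ).edgeSet).ncard = k}, max 5 Δ ≤ k := by
    rintro k ⟨f, hf, rfl⟩
    have hD : Δ ≤ (edgePlus f '' (wheel Δ).edgeSet).ncard := lower_Δ hΔ f hf
    have h5 : 5 ≤ (edgePlus f '' (wheel Δ).edgeSet).ncard := by
      rcases (by omega : Δ = 3 ∨ Δ = 4 ∨ 5 ≤ Δ) with rfl | rfl | h5
      · exact lower3 f hf
      · exact lower4 f hf
      · omega
    exact max_le h5 hD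
  exact le_antisymm (Nat.sInf_le hmem) (le_csInf ⟨_, hmem⟩ hlow)
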